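/- Let 0 < ε ≤ 1, let x be a vertex with μ(x) ≥ 1/n (n the number of vertices, W the maximum edge weight), let t be an integer with t ≥ 7·n²·W/ε, and let Ŵ be an n×n matrix with D^t[x,y] ≤ Ŵ[x,y] ≤ (1 + ε/7)·D^t[x,y] for all y. Then μ̂(x) := (min_y Ŵ[x,y]) / ((1 − ε/7)·t) satisfies μ(x) ≤ μ̂(x) ≤ (1+ε)·μ(x). -/

import Mathlib

set_option maxHeartbeats 1000000


open scoped ENNReal

/-- A walk of length `t` in the graph: `t+1` vertices with consecutive ones joined by edges
(edges and vertices may repeat). -/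
def IsWalk {n : ℕ} (E : Fin n → Fin n → Prop) {t : ℕ} (p : Fin (t + 1) → Fin n) : Prop :=
  ∀ i : Fin t, E (p i.castSucc) (p i.succ)

/-- The weight of a walk: the sum of its edge weights. -/
def walkWeight {n : ℕ} (w : Fin n → Fin n → ℕ) {t : ℕ} (p : Fin (t + 1) → Fin n) : ℕ :=
  ∑ i : Fin t, w (p i.castSucc) (p i.succ)
/-- `y` is reachable from `x` (by a path of length ≥ 0). -/
def Reachable {n : ℕ} (E : Fin n → Fin n → Prop) (x y : Fin n) : Prop :=
  ∃ (t : ℕ) (p : Fin (t + 1) → Fin n), IsWalk E p ∧ p 0 = x ∧ p (Fin.last t) = y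

/-- The set of mean weights of cycles reachable from `x`. -/
def cycleMeans {n : ℕ} (E : Fin n → Fin n → Prop) (w : Fin n → Fin n → ℕ)
    (x : Fin n) : Set ℝ :=
  {q | ∃ (t : ℕ) (p : Fin (t + 1) → Fin n), 0 < t ∧ IsWalk E p ∧
    p (Fin.last t) = p 0 ∧ Reachable E x (p 0) ∧ q = (walkWeight w p : ℝ) / t}

/-- `mcm E w x` is `μ(x)`, the minimum mean weight over all cycles reachable from `x`. -/
noncomputable def mcm {n : ℕ} (E : Fin n → Fin n → Prop) (w : Fin n → Fin n → ℕ)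
    (x : Fin n) : ℝ :=
  sInf (cycleMeans E w x)
/-- The min-plus product of two matrices with entries in `[0, ∞]`. -/
noncomputable def minPlusE {n : ℕ} (A B : Matrix (Fin n) (Fin n) ℝ≥0∞) :
    Matrix (Fin n) (Fin n) ℝ≥0∞ :=
  fun i j => ⨅ k, A i k + B k j

/-- The `t`-th min-plus power of a matrix with entries in `[0, ∞]`. -/
noncomputable def minPlusPowE {n : ℕ} (D : Matrix (Fin n) (Fin n) ℝ≥0∞) :
    ℕ → Matrix (Fin n) (Fin n) ℝ≥0∞
  | 0 => fun i j => if i = j then 0 else ⊤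
  | t + 1 => minPlusE D (minPlusPowE D t)

/-- The weight matrix of the graph, viewed with entries in `[0, ∞]`:
`D[x,y] = w x y` if `(x,y)` is an edge, `∞` otherwise. -/
noncomputable def weightMatrixE {n : ℕ} (E : Fin n → Fin n → Prop) [DecidableRel E]
    (w : Fin n → Fin n → ℕ) : Matrix (Fin n) (Fin n) ℝ≥0∞ :=
  fun x y => if E x y then (w x y : ℝ≥0∞) else ⊤



section HW
variable {n : ℕ} (E : Fin n → Fin n → Prop) (w : Fin n → Fin n → ℕ)

/-- A ℕ-indexed walk relation: there is a walk of length `t` from `x` to `y` of weight `c`. -/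
def HW (x y : Fin n) (t c : ℕ) : Prop :=
  ∃ v : ℕ → Fin n, (∀ k < t, E (v k) (v (k+1))) ∧ v 0 = x ∧ v t = y ∧
    ∑ k ∈ Finset.range t, w (v k) (v (k+1)) = c

variable {E w}

lemma hw_zero {x y : Fin n} {c : ℕ} (h : HW E w x y 0 c) : x = y ∧ c = 0 := by
  obtain ⟨v, _, h0, ht, hs⟩ := h
  simp at hs; exact ⟨h0 ▸ ht ▸ rfl, hs.symm⟩

lemma hw_refl (x : Fin n) : HW E w x x 0 0 := ⟨fun _ => x, by simp, rfl, rfl, by simp⟩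

lemma hw_cons {x z y : Fin n} {t c : ℕ} (hE : E x z) (h : HW E w z y t c) :
    HW E w x y (t+1) (w x z + c) := by
  obtain ⟨v, hv, h0, ht, hs⟩ := h
  refine ⟨fun k => if k = 0 then x else v (k-1), ?_, by simp, by simp [ht], ?_⟩
  · intro k hk
    cases k with
    | zero => simpa [h0] using hE
    | succ m => simpa using hv m (by omega)
  · rw [Finset.sum_range_succ']
    simp only [Nat.succ_ne_zero, if_false, Nat.add_sub_cancel, if_pos rfl]
    rw [hs]; simp [h0]; ring

lemma hw_destruct {x y : Fin n} {t c : ℕ} (h : HW E w x y (t+1) c) :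
    ∃ z c', E x z ∧ HW E w z y t c' ∧ c = w x z + c' := by
  obtain ⟨v, hv, h0, ht, hs⟩ := h
  refine ⟨v 1, ∑ k ∈ Finset.range t, w (v (k+1)) (v (k+2)),
    h0 ▸ hv 0 (by omega), ⟨fun k => v (k+1), fun k hk => hv (k+1) (by omega), rfl, ht, rfl⟩, ?_⟩
  rw [← hs, Finset.sum_range_succ', h0]; ring

lemma hw_concat {x y z : Fin n} {s t a b : ℕ} (h1 : HW E w x y s a) (h2 : HW E w y z t b) :
    HW E w x z (s+t) (a+b) := by
  induction s generalizing x a with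
  | zero => obtain ⟨rfl, rfl⟩ := hw_zero h1; simpa using h2
  | succ m ih =>
    obtain ⟨u, c', hE, h', rfl⟩ := hw_destruct h1
    have := hw_cons hE (ih h')
    have e1 : m + 1 + t = (m + t) + 1 := by ring
    have e2 : w x u + c' + b = w x u + (c' + b) := by ring
    rw [e1, e2]; exact this

lemma hw_sub {v : ℕ → Fin n} {t : ℕ} (hv : ∀ k < t, E (v k) (v (k+1))) {a b : ℕ}
    (h : a + b ≤ t) :
    HW E w (v a) (v (a+b)) b (∑ k ∈ Finset.range b, w (v (a+k)) (v (a+k+1))) := by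
  exact ⟨fun k => v (a+k), fun k hk => by
    have := hv (a+k) (by omega); simpa [Nat.add_assoc] using this, rfl, rfl, rfl⟩

lemma hw_weight_le {W : ℕ} (hW : ∀ a b : Fin n, E a b → w a b ≤ W) {x y : Fin n} {t c : ℕ}
    (h : HW E w x y t c) : c ≤ t * W := by
  obtain ⟨v, hv, _, _, rfl⟩ := h
  calc ∑ k ∈ Finset.range t, w (v k) (v (k+1)) ≤ ∑ k ∈ Finset.range t, W :=
        Finset.sum_le_sum fun k hk => hW _ _ (hv k (Finset.mem_range.mp hk))
    _ = t * W := by simp [mul_comm]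

lemma hw_split {x z : Fin n} {s t c : ℕ} (h : HW E w x z (s+t) c) :
    ∃ (y : Fin n) (a b : ℕ), HW E w x y s a ∧ HW E w y z t b ∧ c = a + b := by
  obtain ⟨v, hv, h0, ht, hs⟩ := h
  have h1 := hw_sub (w := w) hv (show 0 + s ≤ s + t by omega)
  have h2 := hw_sub (w := w) hv (show s + t ≤ s + t from le_refl _)
  simp only [Nat.zero_add] at h1
  rw [h0] at h1; rw [ht] at h2
  refine ⟨v s, _, _, h1, h2, ?_⟩
  rw [← hs, Finset.sum_range_add]

lemma isWalk_hw {t : ℕ} {p : Fin (t+1) → Fin n} (h : IsWalk E p) :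
    HW E w (p 0) (p (Fin.last t)) t (walkWeight w p) := by
  refine ⟨fun k => p ⟨min k t, by omega⟩, ?_, ?_, ?_, ?_⟩
  · intro k hk
    have := h ⟨k, hk⟩
    have e1 : (⟨min k t, by omega⟩ : Fin (t+1)) = (⟨k, hk⟩ : Fin t).castSucc := by
      simp [Fin.ext_iff]; omega
    have e2 : (⟨min (k+1) t, by omega⟩ : Fin (t+1)) = (⟨k, hk⟩ : Fin t).succ := by
      simp [Fin.ext_iff]; omega
    show E (p ⟨min k t, by omega⟩) (p ⟨min (k+1) t, by omega⟩)
    rw [e1, e2]; exact this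
  · congr 1
  · congr 1; simp [Fin.ext_iff, Fin.last]
  · show ∑ k ∈ Finset.range t,
        w (p ⟨min k t, by omega⟩) (p ⟨min (k+1) t, by omega⟩) = walkWeight w p
    rw [walkWeight,
      ← Fin.sum_univ_eq_sum_range (fun k => w (p ⟨min k t, by omega⟩) (p ⟨min (k+1) t, by omega⟩)) t]
    apply Finset.sum_congr rfl
    intro i _
    congr 1 <;> congr 1 <;> simp [Fin.ext_iff] <;> omega

lemma hw_isWalk {x y : Fin n} {t c : ℕ} (h : HW E w x y t c) :
    ∃ p : Fin (t+1) → Fin n, IsWalk E p ∧ p 0 = x ∧ p (Fin.last t) = y ∧ walkWeight w p = c := by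
  obtain ⟨v, hv, h0, ht, hs⟩ := h
  refine ⟨fun i => v i.val, fun i => hv i.val i.isLt, h0, ht, ?_⟩
  show ∑ i : Fin t, w (v i.castSucc.val) (v i.succ.val) = c
  simp only [Fin.coe_castSucc, Fin.val_succ]
  rw [Finset.sum_range] at hs
  exact hs

lemma reachable_iff {x y : Fin n} : Reachable E x y ↔ ∃ t c, HW E w x y t c := by
  constructor
  · rintro ⟨t, p, hp, h0, hl⟩
    exact ⟨t, _, h0 ▸ hl ▸ isWalk_hw hp⟩
  · rintro ⟨t, c, h⟩
    obtain ⟨p, hp, h0, hl, _⟩ := hw_isWalk h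
    exact ⟨t, p, hp, h0, hl⟩

lemma reachable_refl (x : Fin n) : Reachable E x x :=
  (reachable_iff (w := fun _ _ => 0)).mpr ⟨0, 0, hw_refl x⟩

lemma reachable_trans {x y z : Fin n} (h1 : Reachable E x y) (h2 : Reachable E y z) :
    Reachable E x z := by
  obtain ⟨t, c, h1⟩ := (reachable_iff (w := fun _ _ => 0)).mp h1
  obtain ⟨s, d, h2⟩ := (reachable_iff (w := fun _ _ => 0)).mp h2
  exact (reachable_iff (w := fun _ _ => 0)).mpr ⟨_, _, hw_concat h1 h2⟩

lemma hw_mem_cycleMeans {x z : Fin n} {ℓ c : ℕ} (hℓ : 0 < ℓ) (h : HW E w z z ℓ c)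
    (hr : Reachable E x z) : ((c : ℝ) / ℓ) ∈ cycleMeans E w x := by
  obtain ⟨p, hp, h0, hl, hwt⟩ := hw_isWalk h
  exact ⟨ℓ, p, hℓ, hp, by rw [hl, h0], h0 ▸ hr, by rw [hwt]⟩

lemma cycleMeans_nonneg {x : Fin n} {q : ℝ} (h : q ∈ cycleMeans E w x) : 0 ≤ q := by
  obtain ⟨t, p, ht, _, _, _, rfl⟩ := h
  positivity

lemma cycleMeans_bddBelow (x : Fin n) : BddBelow (cycleMeans E w x) :=
  ⟨0, fun q hq => cycleMeans_nonneg hq⟩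

lemma mcm_le {x : Fin n} {q : ℝ} (h : q ∈ cycleMeans E w x) : mcm E w x ≤ q :=
  csInf_le (cycleMeans_bddBelow x) h

lemma mcm_le_hw {x z : Fin n} {ℓ c : ℕ} (hℓ : 0 < ℓ) (h : HW E w z z ℓ c)
    (hr : Reachable E x z) : mcm E w x * ℓ ≤ c := by
  have h1 := mcm_le (hw_mem_cycleMeans hℓ h hr)
  have hℓ' : (0:ℝ) < ℓ := Nat.cast_pos.mpr hℓ
  calc mcm E w x * ℓ ≤ (c:ℝ)/ℓ * ℓ := mul_le_mul_of_nonneg_right h1 hℓ'.le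
    _ = c := div_mul_cancel₀ _ hℓ'.ne'

lemma exists_rep (v : ℕ → Fin n) {t : ℕ} (h : n ≤ t) :
    ∃ i j, i < j ∧ j ≤ t ∧ v i = v j := by
  have hcard : (Finset.univ : Finset (Fin n)).card < (Finset.range (t+1)).card := by
    simp; omega
  obtain ⟨i, hi, j, hj, hne, heq⟩ :=
    Finset.exists_ne_map_eq_of_card_lt_of_maps_to hcard (fun a _ => Finset.mem_univ (v a))
  simp only [Finset.mem_range] at hi hj
  rcases lt_or_gt_of_ne hne with h' | h'
  · exact ⟨i, j, h', by omega, heq⟩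
  · exact ⟨j, i, h', by omega, heq.symm⟩

lemma mediant {a b p q : ℝ} (hp : 0 < p) (hq : 0 < q) :
    min (a/p) (b/q) ≤ (a+b)/(p+q) := by
  set m := min (a/p) (b/q) with hm
  have h1 : m * p ≤ a := by
    have := min_le_left (a/p) (b/q)
    calc m * p ≤ (a/p) * p := mul_le_mul_of_nonneg_right this hp.le
      _ = a := by field_simp
  have h2 : m * q ≤ b := by
    have := min_le_right (a/p) (b/q)
    calc m * q ≤ (b/q) * q := mul_le_mul_of_nonneg_right this hq.le
      _ = b := by field_simp
  rw [le_div_iff₀ (by positivity)]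
  nlinarith

/-- Every walk of length `t` starting at a vertex reachable from `x` has weight at least
`μ(x) * (t - n)`. -/
lemma weight_lower {x : Fin n} (hmu0 : 0 ≤ mcm E w x) :
    ∀ t : ℕ, ∀ z y : Fin n, ∀ c : ℕ, HW E w z y t c → Reachable E x z →
      mcm E w x * ((t:ℝ) - n) ≤ c := by
  intro t
  induction t using Nat.strong_induction_on with
  | _ t ih =>
    intro z y c h hr
    by_cases hn : t < n
    · have h1 : ((t:ℝ) - n) ≤ 0 := by
        have : (t:ℝ) < n := by exact_mod_cast hn
        linarith
      have h2 := mul_nonpos_of_nonneg_of_nonpos hmu0 h1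
      have hc : (0:ℝ) ≤ c := by positivity
      linarith
    · push_neg at hn
      obtain ⟨v, hv, h0, hT, hs⟩ := h
      obtain ⟨i, j, hij, hjt, heq⟩ := exists_rep v (le_trans hn (by omega) : n ≤ t)
      have h1 := hw_sub (w := w) hv (show (0:ℕ) + i ≤ t by omega)
      simp only [Nat.zero_add] at h1
      have h2 := hw_sub (w := w) hv (show i + (j - i) ≤ t by omega)
      have h3 := hw_sub (w := w) hv (show j + (t - j) ≤ t by omega)
      rw [show i + (j-i) = j by omega] at h2
      rw [show j + (t-j) = t by omega] at h3
      rw [← heq] at h2 h3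
      -- h2 : cycle at v i of length j - i; h1 ++ h3 : walk of length i + (t-j)
      have hrj : Reachable E x (v i) := by
        refine reachable_trans hr ?_
        rw [← h0]
        exact (reachable_iff (w := w)).mpr ⟨_, _, h1⟩
      have hcyc2 := hw_concat h1 h3
      rw [h0, hT] at hcyc2
      have ihrest := ih (i + (t-j)) (by omega) z y _ hcyc2 hr
      have hcycle := mcm_le_hw (by omega : 0 < j - i) h2 hrj
      set c1 := ∑ k ∈ Finset.range i, w (v k) (v (k+1)) with hc1
      set c2 := ∑ k ∈ Finset.range (j-i), w (v (i+k)) (v (i+k+1)) with hc2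
      set c3 := ∑ k ∈ Finset.range (t-j), w (v (j+k)) (v (j+k+1)) with hc3
      have hsum : c = c1 + c2 + c3 := by
        rw [← hs, show t = i + ((j-i) + (t-j)) by omega,
          Finset.sum_range_add, Finset.sum_range_add, hc1, hc2, hc3]
        rw [add_assoc]
        congr 1
        congr 1
        apply Finset.sum_congr rfl
        intro k _
        rw [show i + (j - i + k) = j + k by omega]
      have cast1 : ((j - i : ℕ):ℝ) = (j:ℝ) - i := by
        rw [Nat.cast_sub hij.le]
      have cast2 : ((i + (t - j) : ℕ):ℝ) = (i:ℝ) + t - j := by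
        push_cast [Nat.cast_sub hjt]; ring
      rw [cast1] at hcycle
      rw [cast2] at ihrest
      have : (c:ℝ) = (c1:ℝ) + c2 + c3 := by exact_mod_cast congrArg (Nat.cast : ℕ → ℝ) hsum
      push_cast at ihrest
      nlinarith [hcycle, ihrest]

/-- Any reachable cycle contains (in mean) a reachable short cycle (length ≤ n). -/
lemma short_cycle {x : Fin n} :
    ∀ ℓ : ℕ, ∀ z : Fin n, ∀ c : ℕ, 0 < ℓ → HW E w z z ℓ c → Reachable E x z →
      ∃ (ℓ' : ℕ) (z' : Fin n) (c' : ℕ), 0 < ℓ' ∧ ℓ' ≤ n ∧ HW E w z' z' ℓ' c' ∧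
        Reachable E x z' ∧ (c':ℝ)/ℓ' ≤ (c:ℝ)/ℓ := by
  intro ℓ
  induction ℓ using Nat.strong_induction_on with
  | _ ℓ ih =>
    intro z c hℓ h hr
    by_cases hn : ℓ ≤ n
    · exact ⟨ℓ, z, c, hℓ, hn, h, hr, le_refl _⟩
    · push_neg at hn
      obtain ⟨v, hv, h0, hT, hs⟩ := h
      obtain ⟨i, j, hij, hjn, heq⟩ := exists_rep (t := n) v (le_refl n)
      have hjℓ : j ≤ ℓ := by omega
      have h1 := hw_sub (w := w) hv (show (0:ℕ) + i ≤ ℓ by omega)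
      simp only [Nat.zero_add] at h1
      have h2 := hw_sub (w := w) hv (show i + (j - i) ≤ ℓ by omega)
      have h3 := hw_sub (w := w) hv (show j + (ℓ - j) ≤ ℓ by omega)
      rw [show i + (j-i) = j by omega] at h2
      rw [show j + (ℓ-j) = ℓ by omega] at h3
      rw [← heq] at h2 h3
      have hrj : Reachable E x (v i) := by
        refine reachable_trans hr ?_
        rw [← h0]
        exact (reachable_iff (w := w)).mpr ⟨_, _, h1⟩
      have hrem := hw_concat h1 h3
      rw [h0] at hrem
      rw [hT] at hrem
      set c1 := ∑ k ∈ Finset.range i, w (v k) (v (k+1)) with hc1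
      set c2 := ∑ k ∈ Finset.range (j-i), w (v (i+k)) (v (i+k+1)) with hc2
      set c3 := ∑ k ∈ Finset.range (ℓ-j), w (v (j+k)) (v (j+k+1)) with hc3
      have hsum : c = c2 + (c1 + c3) := by
        rw [← hs, show ℓ = i + ((j-i) + (ℓ-j)) by omega,
          Finset.sum_range_add, Finset.sum_range_add, hc1, hc2, hc3]
        have : ∑ k ∈ Finset.range (ℓ-j), w (v (i + (j - i + k))) (v (i + (j - i + k) + 1)) = c3 := by
          rw [hc3]
          apply Finset.sum_congr rfl
          intro k _
          rw [show i + (j - i + k) = j + k by omega]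
        rw [this]
        ring
      -- mediant: min (c2/(j-i)) ((c1+c3)/(ℓ-(j-i))) ≤ c/ℓ
      have hmed : min ((c2:ℝ)/((j:ℝ)-i)) (((c1+c3 : ℕ):ℝ)/((ℓ:ℝ)-((j:ℝ)-i)))
          ≤ (c:ℝ)/ℓ := by
        have hp : (0:ℝ) < (j:ℝ) - i := by
          have : (i:ℝ) < j := by exact_mod_cast hij
          linarith
        have hq : (0:ℝ) < (ℓ:ℝ) - ((j:ℝ)-i) := by
          have hjr : (j:ℝ) ≤ n := by exact_mod_cast hjn
          have hnr : (n:ℝ) < ℓ := by exact_mod_cast hn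
          have : (0:ℝ) ≤ i := by positivity
          linarith
        have := mediant (a := (c2:ℝ)) (b := ((c1+c3:ℕ):ℝ)) hp hq
        have he : (c2:ℝ) + ((c1+c3:ℕ):ℝ) = c := by
          push_cast [hsum]; ring
        have he2 : ((j:ℝ)-i) + ((ℓ:ℝ)-((j:ℝ)-i)) = ℓ := by ring
        rw [he, he2] at this
        exact this
      rcases le_total ((c2:ℝ)/((j:ℝ)-i)) (((c1+c3:ℕ):ℝ)/((ℓ:ℝ)-((j:ℝ)-i))) with hle | hle
      · refine ⟨j - i, v i, c2, by omega, by omega, h2, hrj, ?_⟩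
        rw [min_eq_left hle] at hmed
        rw [Nat.cast_sub hij.le]
        exact hmed
      · have hrem' := ih (i + (ℓ - j)) (by omega) z (c1 + c3) (by omega) hrem hr
        obtain ⟨ℓ', z', c', h1', h2', h3', h4', h5'⟩ := hrem'
        refine ⟨ℓ', z', c', h1', h2', h3', h4', ?_⟩
        rw [min_eq_right hle] at hmed
        have hcast : ((i + (ℓ - j) : ℕ):ℝ) = (ℓ:ℝ) - ((j:ℝ) - i) := by
          push_cast [Nat.cast_sub hjℓ]; ring
        rw [hcast] at h5'
        exact le_trans h5' hmed

/-- Reachability can be realized by a walk of length at most `n`. -/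
lemma reach_short' :
    ∀ t : ℕ, ∀ x z : Fin n, ∀ c : ℕ, HW E w x z t c →
      ∃ s c', s ≤ n ∧ HW E w x z s c' := by
  intro t
  induction t using Nat.strong_induction_on with
  | _ t ih =>
    intro x z c h
    by_cases hn : t ≤ n
    · exact ⟨t, c, hn, h⟩
    · push_neg at hn
      obtain ⟨v, hv, h0, hT, hs⟩ := h
      obtain ⟨i, j, hij, hjt, heq⟩ := exists_rep v (by omega : n ≤ t)
      have h1 := hw_sub (w := w) hv (show (0:ℕ) + i ≤ t by omega)
      simp only [Nat.zero_add] at h1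
      have h3 := hw_sub (w := w) hv (show j + (t - j) ≤ t by omega)
      rw [show j + (t-j) = t by omega] at h3
      rw [← heq] at h3
      have hrem := hw_concat h1 h3
      rw [h0, hT] at hrem
      exact ih (i + (t - j)) (by omega) x z _ hrem

lemma reach_short {x z : Fin n} (h : Reachable E x z) :
    ∃ s c, s ≤ n ∧ HW E w x z s c := by
  obtain ⟨t, c, h⟩ := (reachable_iff (w := w)).mp h
  exact reach_short' t x z c h

lemma cycleMeans_iff_hw {x : Fin n} {q : ℝ} :
    q ∈ cycleMeans E w x ↔
      ∃ (ℓ : ℕ) (z : Fin n) (c : ℕ), 0 < ℓ ∧ HW E w z z ℓ c ∧ Reachable E x z ∧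
        q = (c:ℝ)/ℓ := by
  constructor
  · rintro ⟨t, p, ht, hp, hl, hr, rfl⟩
    have := isWalk_hw (w := w) hp
    rw [hl] at this
    exact ⟨t, p 0, walkWeight w p, ht, this, hr, rfl⟩
  · rintro ⟨ℓ, z, c, hℓ, h, hr, rfl⟩
    exact hw_mem_cycleMeans hℓ h hr

lemma mcm_attained {x : Fin n} {W : ℕ} (hW : ∀ a b : Fin n, E a b → w a b ≤ W)
    (hcyc : (cycleMeans E w x).Nonempty) :
    ∃ (ℓ : ℕ) (z : Fin n) (c : ℕ), 0 < ℓ ∧ ℓ ≤ n ∧ HW E w z z ℓ c ∧ Reachable E x z ∧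
      (c:ℝ)/ℓ ≤ mcm E w x := by
  set T : Set ℝ := {q | ∃ (ℓ : ℕ) (z : Fin n) (c : ℕ), 0 < ℓ ∧ ℓ ≤ n ∧ HW E w z z ℓ c ∧
    Reachable E x z ∧ q = (c:ℝ)/ℓ} with hT
  have hfin : T.Finite := by
    have : T ⊆ (fun pr : ℕ × ℕ => (pr.2:ℝ)/pr.1) ''
        ((Finset.range (n+1) ×ˢ Finset.range (n*W+1) : Finset (ℕ × ℕ)) : Set (ℕ × ℕ)) := by
      rintro q ⟨ℓ, z, c, h1, h2, h3, h4, rfl⟩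
      refine ⟨(ℓ, c), ?_, rfl⟩
      simp only [Finset.coe_product, Set.mem_prod, Finset.mem_coe, Finset.mem_range]
      have := hw_weight_le hW h3
      constructor
      · omega
      · have : c ≤ n * W := le_trans this (Nat.mul_le_mul_right W h2)
        omega
    exact Set.Finite.subset (Set.Finite.image _ (Finset.finite_toSet _)) this
  have hTne : T.Nonempty := by
    obtain ⟨q, hq⟩ := hcyc
    obtain ⟨ℓ, z, c, hℓ, h, hr, rfl⟩ := cycleMeans_iff_hw.mp hq
    obtain ⟨ℓ', z', c', h1, h2, h3, h4, h5⟩ := short_cycle ℓ z c hℓ h hr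
    exact ⟨(c':ℝ)/ℓ', ℓ', z', c', h1, h2, h3, h4, rfl⟩
  obtain ⟨qs, hqsT, hqsmin⟩ : ∃ qs ∈ T, ∀ q ∈ T, qs ≤ q := by
    have hne : hfin.toFinset.Nonempty := by
      rwa [Set.Finite.toFinset_nonempty]
    refine ⟨hfin.toFinset.min' hne, ?_, ?_⟩
    · rw [← Set.Finite.mem_toFinset hfin]
      exact Finset.min'_mem _ _
    · intro q hq
      exact Finset.min'_le _ _ ((Set.Finite.mem_toFinset hfin).mpr hq)
  obtain ⟨ℓ, z, c, h1, h2, h3, h4, h5⟩ := hqsT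
  refine ⟨ℓ, z, c, h1, h2, h3, h4, ?_⟩
  rw [← h5]
  apply le_csInf hcyc
  intro q hq
  obtain ⟨ℓ₀, z₀, c₀, hℓ₀, h₀, hr₀, rfl⟩ := cycleMeans_iff_hw.mp hq
  obtain ⟨ℓ', z', c', g1, g2, g3, g4, g5⟩ := short_cycle ℓ₀ z₀ c₀ hℓ₀ h₀ hr₀
  exact le_trans (hqsmin _ ⟨ℓ', z', c', g1, g2, g3, g4, rfl⟩) g5

lemma minPow_eq [DecidableRel E] :
    ∀ (t : ℕ) (x y : Fin n), minPlusPowE (weightMatrixE E w) t x y =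
      ⨅ (c : ℕ) (_ : HW E w x y t c), (c : ℝ≥0∞) := by
  intro t
  induction t with
  | zero =>
    intro x y
    show (if x = y then (0:ℝ≥0∞) else ⊤) = _
    by_cases hxy : x = y
    · subst hxy
      rw [if_pos rfl]
      apply le_antisymm zero_le
      refine le_trans (iInf₂_le 0 (hw_refl _)) ?_
      simp
    · rw [if_neg hxy]
      symm
      rw [iInf_eq_top]
      intro c
      rw [iInf_eq_top]
      intro h
      exact absurd (hw_zero h).1 hxy
  | succ t ih =>
    intro x y
    show (⨅ k, weightMatrixE E w x k + minPlusPowE (weightMatrixE E w) t k y) = _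
    apply le_antisymm
    · refine le_iInf₂ ?_
      intro c h
      obtain ⟨z, c', hE, h', rfl⟩ := hw_destruct h
      refine le_trans (iInf_le _ z) ?_
      rw [ih z y, weightMatrixE, if_pos hE]
      refine le_trans (add_le_add_right (iInf₂_le c' h') _) ?_
      push_cast
      rfl
    · refine le_iInf ?_
      intro k
      by_cases hE : E x k
      · rw [ih k y, weightMatrixE, if_pos hE, ENNReal.add_iInf]
        refine le_iInf ?_
        intro c
        rw [ENNReal.add_iInf]
        refine le_iInf ?_
        intro h'
        refine le_trans (iInf₂_le (w x k + c) (hw_cons hE h')) ?_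
        push_cast
        rfl
      · rw [weightMatrixE, if_neg hE]
        simp

lemma hw_iter {z : Fin n} {ℓ c : ℕ} (h : HW E w z z ℓ c) :
    ∀ k : ℕ, HW E w z z (k*ℓ) (k*c) := by
  intro k
  induction k with
  | zero => simpa using hw_refl z
  | succ m ih =>
    have := hw_concat ih h
    rw [show (m+1)*ℓ = m*ℓ + ℓ by ring, show (m+1)*c = m*c + c by ring]
    exact this

end HW

/-- Let `0 < ε ≤ 1`, let `x` be a vertex with `μ(x) ≥ 1/n`, let `t` be an
integer with `t ≥ 7·n²·W/ε`, and let `Ŵ` be a matrix with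
`D^t[x,y] ≤ Ŵ[x,y] ≤ (1 + ε/7)·D^t[x,y]` for all `y`. Then
`μ̂(x) := (min_y Ŵ[x,y]) / ((1 − ε/7)·t)` satisfies `μ(x) ≤ μ̂(x) ≤ (1+ε)·μ(x)`. -/
theorem approx_mcm_from_approx_power {n : ℕ} (E : Fin n → Fin n → Prop) [DecidableRel E]
    (w : Fin n → Fin n → ℕ) (hout : ∀ v : Fin n, ∃ u : Fin n, E v u)
    (W : ℕ) (hW : ∀ a b : Fin n, E a b → w a b ≤ W)
    (x : Fin n) (hcyc : (cycleMeans E w x).Nonempty)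
    (ε : ℝ) (hε0 : 0 < ε) (hε1 : ε ≤ 1)
    (hmu : 1 / (n : ℝ) ≤ mcm E w x)
    (t : ℕ) (ht : 7 * (n : ℝ) ^ 2 * (W : ℝ) / ε ≤ (t : ℝ))
    (What : Matrix (Fin n) (Fin n) ℝ≥0∞)
    (hWhat : ∀ y : Fin n,
      minPlusPowE (weightMatrixE E w) t x y ≤ What x y ∧
      What x y ≤ ENNReal.ofReal (1 + ε / 7) * minPlusPowE (weightMatrixE E w) t x y) :
    mcm E w x ≤ (⨅ y : Fin n, What x y).toReal / ((1 - ε / 7) * (t : ℝ)) ∧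
    (⨅ y : Fin n, What x y).toReal / ((1 - ε / 7) * (t : ℝ)) ≤ (1 + ε) * mcm E w x := by
  set μ := mcm E w x with hμdef
  have hn : 0 < n := x.pos
  have hn' : (1:ℝ) ≤ n := by exact_mod_cast hn
  have hμpos : 0 < μ := lt_of_lt_of_le (by positivity) hmu
  have hμ0 : 0 ≤ μ := hμpos.le
  -- W ≥ 1
  have hW1 : 1 ≤ W := by
    by_contra hc
    push_neg at hc
    interval_cases W
    obtain ⟨q, hq⟩ := hcyc
    obtain ⟨ℓ, z, c, hℓ, h, hr, rfl⟩ := cycleMeans_iff_hw.mp hq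
    have hc0 : c = 0 := by have := hw_weight_le hW h; omega
    have := mcm_le hq
    rw [hc0] at this
    simp at this
    rw [← hμdef] at this
    linarith
  have hW1' : (1:ℝ) ≤ W := by exact_mod_cast hW1
  -- ε t ≥ 7 n² W
  have hεt : 7 * (n:ℝ)^2 * W ≤ ε * t := by
    rw [div_le_iff₀ hε0] at ht
    linarith [ht]
  have htnn : (0:ℝ) ≤ t := Nat.cast_nonneg t
  have hn2W : (n:ℝ) ≤ (n:ℝ)^2 * W := by nlinarith [sq_nonneg ((n:ℝ) - 1)]
  have hεt' : ε * (t:ℝ) ≤ t := by nlinarith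
  have htW : (n:ℝ) ≤ (t:ℝ) := by nlinarith
  have htn : n ≤ t := by exact_mod_cast htW
  have ht0 : 0 < t := by omega
  have ht0' : (0:ℝ) < t := by exact_mod_cast ht0
  have hA : (0:ℝ) < (1 - ε/7) * t := mul_pos (by linarith) ht0'
  set m := ⨅ y : Fin n, What x y with hm
  -- Lower bound: ofReal (μ * (t - n)) ≤ m
  have hlow : ENNReal.ofReal (μ * ((t:ℝ) - n)) ≤ m := by
    refine le_iInf fun y => le_trans ?_ (hWhat y).1
    rw [minPow_eq]
    refine le_iInf₂ fun c hc => ?_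
    have := weight_lower (x := x) hμ0 t x y c hc (reachable_refl x)
    calc ENNReal.ofReal (μ * ((t:ℝ) - n)) ≤ ENNReal.ofReal c := ENNReal.ofReal_le_ofReal this
      _ = (c : ℝ≥0∞) := ENNReal.ofReal_natCast c
  -- Upper bound: construct a walk of length t with weight ≤ t μ + 2 n W
  obtain ⟨ℓ, z, c, hℓ0, hℓn, hcycw, hreach, hmean⟩ := mcm_attained hW hcyc
  obtain ⟨s, cp, hsn, hpath⟩ := reach_short hreach
  set k := (t - s) / ℓ with hk
  set r := (t - s) % ℓ with hr
  have hkr : k * ℓ + r = t - s := by rw [hk, hr, Nat.mul_comm]; exact Nat.div_add_mod (t - s) ℓ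
  have hrℓ : r < ℓ := Nat.mod_lt _ hℓ0
  obtain ⟨z', a, b, hpart, _, hab⟩ := hw_split (s := r) (t := ℓ - r)
    (by rw [show r + (ℓ - r) = ℓ by omega]; exact hcycw)
  have hwalk : HW E w x z' t (cp + (k * c + a)) := by
    have h1 := hw_concat hpath (hw_concat (hw_iter hcycw k) hpart)
    rw [show s + (k * ℓ + r) = t by omega] at h1
    exact h1
  -- weight bound
  have hcμ : (c:ℝ) ≤ μ * ℓ := by
    have hℓ' : (0:ℝ) < ℓ := by exact_mod_cast hℓ0
    rw [div_le_iff₀ hℓ'] at hmean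
    linarith
  have hkℓt : (k:ℝ) * ℓ ≤ t := by
    have : k * ℓ ≤ t := by omega
    exact_mod_cast this
  have hcp : (cp:ℝ) ≤ n * W := by
    have := hw_weight_le hW hpath
    have : cp ≤ n * W := le_trans this (Nat.mul_le_mul_right W hsn)
    exact_mod_cast this
  have ha : (a:ℝ) ≤ n * W := by
    have := hw_weight_le hW hpart
    have : a ≤ n * W := le_trans this (Nat.mul_le_mul_right W (by omega))
    exact_mod_cast this
  have hctot : ((cp + (k * c + a) : ℕ) : ℝ) ≤ (t:ℝ) * μ + 2 * (n:ℝ) * W := by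
    push_cast
    have hkc : (k:ℝ) * c ≤ (t:ℝ) * μ := by
      calc (k:ℝ) * c ≤ (k:ℝ) * (μ * ℓ) := by
            apply mul_le_mul_of_nonneg_left hcμ (by positivity)
        _ = μ * ((k:ℝ) * ℓ) := by ring
        _ ≤ μ * t := mul_le_mul_of_nonneg_left hkℓt hμ0
        _ = (t:ℝ) * μ := by ring
    linarith
  -- m ≤ ofReal (1+ε/7) * ctot
  have hup : m ≤ ENNReal.ofReal (1 + ε/7) * ((cp + (k * c + a) : ℕ) : ℝ≥0∞) := by
    refine le_trans (iInf_le _ z') (le_trans (hWhat z').2 ?_)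
    apply mul_le_mul_right
    rw [minPow_eq]
    exact iInf₂_le _ hwalk
  have hmne : m ≠ ⊤ := by
    intro hcon
    rw [hcon] at hup
    have : ENNReal.ofReal (1 + ε/7) * ((cp + (k * c + a) : ℕ) : ℝ≥0∞) ≠ ⊤ :=
      ENNReal.mul_ne_top ENNReal.ofReal_ne_top (ENNReal.natCast_ne_top _)
    exact this (top_le_iff.mp hup)
  -- real bounds on m.toReal
  have hlb_real : μ * ((t:ℝ) - n) ≤ m.toReal := by
    have h1 := ENNReal.toReal_mono hmne hlow
    rwa [ENNReal.toReal_ofReal (by nlinarith)] at h1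
  have hub_real : m.toReal ≤ (1 + ε/7) * ((t:ℝ) * μ + 2 * n * W) := by
    have h1 := ENNReal.toReal_mono
      (ENNReal.mul_ne_top ENNReal.ofReal_ne_top (ENNReal.natCast_ne_top _)) hup
    rw [ENNReal.toReal_mul, ENNReal.toReal_ofReal (by linarith), ENNReal.toReal_natCast] at h1
    refine le_trans h1 ?_
    apply mul_le_mul_of_nonneg_left hctot (by linarith)
  -- the key real-number inequalities
  have hnεt : (n:ℝ) ≤ ε * t / 7 := by linarith
  have hP : (0:ℝ) ≤ (t:ℝ) * μ := mul_nonneg htnn hμ0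
  constructor
  · rw [le_div_iff₀ hA]
    calc μ * ((1 - ε/7) * t) ≤ μ * ((t:ℝ) - n) := by
          apply mul_le_mul_of_nonneg_left (by linarith) hμ0
      _ ≤ m.toReal := hlb_real
  · rw [div_le_iff₀ hA]
    have h1 : (1:ℝ) ≤ n * μ := by
      rw [div_le_iff₀ (by positivity : (0:ℝ) < (n:ℝ))] at hmu
      linarith [hmu]
    have h2 : (n:ℝ) * W ≤ (n:ℝ)^2 * W * μ := by nlinarith [mul_nonneg (mul_nonneg (by linarith : (0:ℝ) ≤ (n:ℝ)) (by linarith : (0:ℝ) ≤ (W:ℝ))) hμ0]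
    have h3 : (n:ℝ)^2 * W * μ ≤ ε * t * μ / 7 := by nlinarith [mul_le_mul_of_nonneg_right hεt hμ0]
    have hnW : (n:ℝ) * W ≤ ε * t * μ / 7 := by linarith
    have key : (1 + ε/7) * (1 + 2*ε/7) ≤ (1 + ε) * (1 - ε/7) := by nlinarith
    calc m.toReal ≤ (1 + ε/7) * ((t:ℝ) * μ + 2 * n * W) := hub_real
      _ ≤ (1 + ε/7) * ((t:ℝ) * μ + 2 * (ε * t * μ / 7)) := by
          apply mul_le_mul_of_nonneg_left (by linarith) (by linarith)
      _ = (1 + ε/7) * (1 + 2*ε/7) * ((t:ℝ) * μ) := by ring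
      _ ≤ (1 + ε) * (1 - ε/7) * ((t:ℝ) * μ) := mul_le_mul_of_nonneg_right key hP
      _ = (1 + ε) * μ * ((1 - ε/7) * t) := by ring
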